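/- Let B > 0, E₀ > 0, E₁ > 0, 0 < t₁ < T_O, and T₀ > t₁ satisfy B = t₁·log(1 + E₀/t₁) + (T_O − t₁)·log(1 + E₁/(T_O − t₁)). Then B·((T₀ − t₁)/T₀) ≤ T_O · log(1 + (E₁ + E₀·(T₀ − t₁)/T₀)/T_O). -/

import Mathlib

lemma gadd (a b x y : ℝ) (ha : 0 < a) (hb : 0 < b) (hx : 0 < x) (hy : 0 < y) :
    a * Real.log (1 + x / a) + b * Real.log (1 + y / b) ≤
    (a + b) * Real.log (1 + (x + y) / (a + b)) := by
  have hs : 0 < a + b := by linarith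
  have hp : (1 : ℝ) + x / a ∈ Set.Ioi (0 : ℝ) := by
    simp only [Set.mem_Ioi]; positivity
  have hq : (1 : ℝ) + y / b ∈ Set.Ioi (0 : ℝ) := by
    simp only [Set.mem_Ioi]; positivity
  have hw1 : (0 : ℝ) ≤ a / (a + b) := by positivity
  have hw2 : (0 : ℝ) ≤ b / (a + b) := by positivity
  have hw : a / (a + b) + b / (a + b) = 1 := by field_simp
  have key := strictConcaveOn_log_Ioi.concaveOn.2 hp hq hw1 hw2 hw
  simp only [smul_eq_mul] at key
  have harg : a / (a + b) * (1 + x / a) + b / (a + b) * (1 + y / b)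
      = 1 + (x + y) / (a + b) := by field_simp; ring
  rw [harg] at key
  have h2 := mul_le_mul_of_nonneg_left key (le_of_lt hs)
  have hL : (a + b) * (a / (a + b) * Real.log (1 + x / a)
      + b / (a + b) * Real.log (1 + y / b))
      = a * Real.log (1 + x / a) + b * Real.log (1 + y / b) := by
    field_simp
  linarith [h2, hL.ge, hL.le]

lemma gmono (a c x : ℝ) (ha : 0 < a) (hx : 0 < x) (hac : a ≤ c) :
    a * Real.log (1 + x / a) ≤ c * Real.log (1 + x / c) := by
  rcases eq_or_lt_of_le hac with rfl | hlt
  · exact le_rfl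
  have hc : 0 < c := lt_trans ha hlt
  have hp : (1 : ℝ) + x / a ∈ Set.Ioi (0 : ℝ) := by
    simp only [Set.mem_Ioi]; positivity
  have hq : (1 : ℝ) ∈ Set.Ioi (0 : ℝ) := by simp
  have hw1 : (0 : ℝ) ≤ a / c := by positivity
  have hw2 : (0 : ℝ) ≤ (c - a) / c := by
    apply div_nonneg <;> linarith
  have hw : a / c + (c - a) / c = 1 := by field_simp; ring
  have key := strictConcaveOn_log_Ioi.concaveOn.2 hp hq hw1 hw2 hw
  simp only [smul_eq_mul, Real.log_one, mul_one, mul_zero, add_zero] at key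
  have harg : a / c * (1 + x / a) + (c - a) / c = 1 + x / c := by
    field_simp; ring
  rw [harg] at key
  have h2 := mul_le_mul_of_nonneg_left key (le_of_lt hc)
  have hL : c * (a / c * Real.log (1 + x / a)) = a * Real.log (1 + x / a) := by
    field_simp
  linarith [h2, hL.ge, hL.le]

theorem lazy_case2_bound (B E₀ E₁ t₁ TO T₀ : ℝ) (hB : 0 < B) (hE₀ : 0 < E₀)
    (hE₁ : 0 < E₁) (ht₁ : 0 < t₁) (htT : t₁ < TO) (hT₀ : t₁ < T₀)
    (heq : B = t₁ * Real.log (1 + E₀ / t₁) + (TO - t₁) * Real.log (1 + E₁ / (TO - t₁))) :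
    B * ((T₀ - t₁) / T₀) ≤ TO * Real.log (1 + (E₁ + E₀ * ((T₀ - t₁) / T₀)) / TO) := by
  set lam : ℝ := (T₀ - t₁) / T₀ with hlam
  have hT₀pos : 0 < T₀ := lt_trans ht₁ hT₀
  have hlam0 : 0 < lam := by
    apply div_pos <;> linarith
  have hlam1 : lam ≤ 1 := by
    rw [hlam, div_le_one hT₀pos]; linarith
  have hd : 0 < TO - t₁ := by linarith
  -- term 1: lam * (t₁ * log(1+E₀/t₁)) = (lam*t₁) * log(1 + (lam*E₀)/(lam*t₁))
  have hratio : E₀ / t₁ = (lam * E₀) / (lam * t₁) := by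
    rw [mul_div_mul_left _ _ (ne_of_gt hlam0)]
  -- term 2: lam ≤ 1, log ≥ 0
  have hlog2 : 0 ≤ Real.log (1 + E₁ / (TO - t₁)) := by
    apply Real.log_nonneg
    have : 0 ≤ E₁ / (TO - t₁) := by positivity
    linarith
  have step2 : lam * ((TO - t₁) * Real.log (1 + E₁ / (TO - t₁)))
      ≤ (TO - t₁) * Real.log (1 + E₁ / (TO - t₁)) := by
    have hnn : 0 ≤ (TO - t₁) * Real.log (1 + E₁ / (TO - t₁)) := by positivity
    nlinarith
  have step3 := gadd (lam * t₁) (TO - t₁) (lam * E₀) E₁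
    (by positivity) hd (by positivity) hE₁
  have step4 := gmono (lam * t₁ + (TO - t₁)) TO (lam * E₀ + E₁)
    (by positivity) (by positivity) (by nlinarith)
  have hfin : B * lam = lam * t₁ * Real.log (1 + (lam * E₀) / (lam * t₁))
      + lam * ((TO - t₁) * Real.log (1 + E₁ / (TO - t₁))) := by
    rw [← hratio, heq]; ring
  have hgoal : 1 + (E₁ + E₀ * lam) / TO = 1 + (lam * E₀ + E₁) / TO := by ring_nf
  rw [hgoal, hfin]
  calc lam * t₁ * Real.log (1 + (lam * E₀) / (lam * t₁))
      + lam * ((TO - t₁) * Real.log (1 + E₁ / (TO - t₁)))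
      ≤ lam * t₁ * Real.log (1 + (lam * E₀) / (lam * t₁))
      + (TO - t₁) * Real.log (1 + E₁ / (TO - t₁)) := by linarith
    _ ≤ (lam * t₁ + (TO - t₁)) * Real.log (1 + (lam * E₀ + E₁) / (lam * t₁ + (TO - t₁))) := step3
    _ ≤ TO * Real.log (1 + (lam * E₀ + E₁) / TO) := step4
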